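/- arXiv:nlin/0606025 — 10 statements merged into one kernel-verified Lean document; each statement's English description precedes it below -/
import Mathlib

section
/- Let α, β, γ, δ, Ψ, Ψ̄ : ℤ² → ℝ be lattice functions such that for all (m,n) ∈ ℤ²: Ψ̄(m+1,n) − Ψ̄(m,n) = δ(m,n)·(Ψ(m+1,n) − Ψ(m,n)) + β(m,n)·(Ψ(m,n+1) − Ψ(m,n)) and Ψ̄(m,n+1) − Ψ̄(m,n) = −α(m,n)·(Ψ(m+1,n) − Ψ(m,n)) − γ(m,n)·(Ψ(m,n+1) − Ψ(m,n)). Then Ψ satisfies, for all (m,n) ∈ ℤ², the 6-point scheme in elementary transformable form: α(m+1,n)Ψ(m+2,n) + β(m,n+1)Ψ(m,n+2) + (γ(m+1,n)+δ(m,n+1))Ψ(m+1,n+1) − (α(m+1,n)+α(m,n)+γ(m+1,n)+δ(m,n))Ψ(m+1,n) − (β(m,n+1)+β(m,n)+γ(m,n)+δ(m,n+1))Ψ(m,n+1) + (α(m,n)+β(m,n)+γ(m,n)+δ(m,n))Ψ(m,n) = 0. -/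
/-- compatibility of the first-order system implies the 6-point
scheme in elementary transformable form. -/
theorem six_point_elementary_transformable
    (α β γ δ Ψ Ψb : ℤ → ℤ → ℝ)
    (h1 : ∀ m n : ℤ, Ψb (m+1) n - Ψb m n =
      δ m n * (Ψ (m+1) n - Ψ m n) + β m n * (Ψ m (n+1) - Ψ m n))
    (h2 : ∀ m n : ℤ, Ψb m (n+1) - Ψb m n =
      - α m n * (Ψ (m+1) n - Ψ m n) - γ m n * (Ψ m (n+1) - Ψ m n)) :
    ∀ m n : ℤ,
      α (m+1) n * Ψ (m+2) n + β m (n+1) * Ψ m (n+2)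
      + (γ (m+1) n + δ m (n+1)) * Ψ (m+1) (n+1)
      - (α (m+1) n + α m n + γ (m+1) n + δ m n) * Ψ (m+1) n
      - (β m (n+1) + β m n + γ m n + δ m (n+1)) * Ψ m (n+1)
      + (α m n + β m n + γ m n + δ m n) * Ψ m n = 0 := by
  intro m n
  have a1 := h1 m (n+1)
  have a2 := h2 m n
  have a3 := h2 (m+1) n
  have a4 := h1 m n
  have e1 : m + 1 + 1 = m + 2 := by ring
  have e2 : n + 1 + 1 = n + 2 := by ring
  rw [e2] at a1
  rw [e1] at a3
  linear_combination a3 + a4 - a1 - a2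
end

section
/- Let A, B, C, G, H, F, Θ, Φ, P : ℤ² → ℝ be lattice functions such that Θ satisfies the 6-point scheme with coefficients (A,B,C,G,H,F), Φ satisfies the adjoint 6-point scheme, and P satisfies the P-equations for (A,B,C,G,H), Θ, Φ. Define α(m,n) := A(m−1,n)Φ(m−1,n)Θ(m+1,n), β(m,n) := B(m,n−1)Φ(m,n−1)Θ(m,n+1), γ(m,n) := (C(m−1,n) − P(m−1,n))Φ(m−1,n)Θ(m,n+1), δ(m,n) := (C(m,n−1) + P(m,n−1))Φ(m,n−1)Θ(m+1,n). Then for every lattice function X : ℤ² → ℝ and all (m,n) ∈ ℤ²: Φ(m,n)·[A(m,n)Θ(m+2,n)X(m+2,n) + B(m,n)Θ(m,n+2)X(m,n+2) + 2C(m,n)Θ(m+1,n+1)X(m+1,n+1) + G(m,n)Θ(m+1,n)X(m+1,n) + H(m,n)Θ(m,n+1)X(m,n+1) − F(m,n)Θ(m,n)X(m,n)] = α(m+1,n)X(m+2,n) + β(m,n+1)X(m,n+2) + (γ(m+1,n)+δ(m,n+1))X(m+1,n+1) − (α(m+1,n)+α(m,n)+γ(m+1,n)+δ(m,n))X(m+1,n)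 − (β(m,n+1)+β(m,n)+γ(m,n)+δ(m,n+1))X(m,n+1) + (α(m,n)+β(m,n)+γ(m,n)+δ(m,n))X(m,n). -/
/-- A function `Ψ` satisfies the 6-point scheme with coefficients `(A,B,C,G,H,F)`. -/
def SixPointScheme (A B C G H F Ψ : ℤ → ℤ → ℝ) : Prop :=
  ∀ m n : ℤ,
    A m n * Ψ (m+2) n + B m n * Ψ m (n+2) + 2 * C m n * Ψ (m+1) (n+1)
      + G m n * Ψ (m+1) n + H m n * Ψ m (n+1) = F m n * Ψ m n

/-- A function `Φ` satisfies the adjoint 6-point scheme. -/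
def AdjSixPointScheme (A B C G H F Φ : ℤ → ℤ → ℝ) : Prop :=
  ∀ m n : ℤ,
    A (m-2) n * Φ (m-2) n + B m (n-2) * Φ m (n-2) + 2 * C (m-1) (n-1) * Φ (m-1) (n-1)
      + G (m-1) n * Φ (m-1) n + H m (n-1) * Φ m (n-1) = F m n * Φ m n

/-- `P` satisfies the P-equations for `(A,B,C,G,H)`, `Θ`, `Φ`. -/
def PEquations (A B C G H Θ Φ P : ℤ → ℤ → ℝ) : Prop :=
  (∀ m n : ℤ,
    Φ m n * Θ (m+1) (n+1) * P m n - Φ (m-1) n * Θ m (n+1) * P (m-1) n =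
      -(B m (n-1) * Φ m (n-1) * Θ m (n+1) + B m n * Φ m n * Θ m (n+2)
        + C (m-1) n * Φ (m-1) n * Θ m (n+1) + C m n * Φ m n * Θ (m+1) (n+1)
        + H m n * Φ m n * Θ m (n+1))) ∧
  (∀ m n : ℤ,
    Φ m n * Θ (m+1) (n+1) * P m n - Φ m (n-1) * Θ (m+1) n * P m (n-1) =
      A (m-1) n * Φ (m-1) n * Θ (m+1) n + A m n * Φ m n * Θ (m+2) n
        + C m (n-1) * Φ m (n-1) * Θ (m+1) n + C m n * Φ m n * Θ (m+1) (n+1)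
        + G m n * Φ m n * Θ (m+1) n)

/-- the gauge transformation with data `Θ`, `Φ`, `P` brings the
6-point scheme to elementary transformable form. -/
theorem gauge_to_elementary_transformable
    (A B C G H F Θ Φ P α β γ δ : ℤ → ℤ → ℝ)
    (hΘ : SixPointScheme A B C G H F Θ)
    (hΦ : AdjSixPointScheme A B C G H F Φ)
    (hP : PEquations A B C G H Θ Φ P)
    (hα : ∀ m n : ℤ, α m n = A (m-1) n * Φ (m-1) n * Θ (m+1) n)
    (hβ : ∀ m n : ℤ, β m n = B m (n-1) * Φ m (n-1) * Θ m (n+1))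
    (hγ : ∀ m n : ℤ, γ m n = (C (m-1) n - P (m-1) n) * Φ (m-1) n * Θ m (n+1))
    (hδ : ∀ m n : ℤ, δ m n = (C m (n-1) + P m (n-1)) * Φ m (n-1) * Θ (m+1) n) :
    ∀ (X : ℤ → ℤ → ℝ) (m n : ℤ),
      Φ m n * (A m n * Θ (m+2) n * X (m+2) n + B m n * Θ m (n+2) * X m (n+2)
        + 2 * C m n * Θ (m+1) (n+1) * X (m+1) (n+1)
        + G m n * Θ (m+1) n * X (m+1) n + H m n * Θ m (n+1) * X m (n+1)
        - F m n * Θ m n * X m n) =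
      α (m+1) n * X (m+2) n + β m (n+1) * X m (n+2)
        + (γ (m+1) n + δ m (n+1)) * X (m+1) (n+1)
        - (α (m+1) n + α m n + γ (m+1) n + δ m n) * X (m+1) n
        - (β m (n+1) + β m n + γ m n + δ m (n+1)) * X m (n+1)
        + (α m n + β m n + γ m n + δ m n) * X m n := by
  intro X m n
  have e1 := hP.1 m n
  have e2 := hP.2 m n
  have t := hΘ m n
  simp only [hα, hβ, hγ, hδ, show m+1-1 = m from by ring, show n+1-1 = n from by ring, show m+1+1 = m+2 from by ring, show n+1+1 = n+2 from by ring]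
  linear_combination -(X (m+1) n * e2) + X m (n+1) * e1 + X m n * (-e1 + e2 + Φ m n * t)
end

section
/- Let A, B, C, G, H, F, Θ, Φ : ℤ² → ℝ be lattice functions with Θ(m,n) ≠ 0 and Φ(m,n) ≠ 0 for all (m,n). Suppose there exist lattice functions α, β, γ, δ : ℤ² → ℝ such that for every lattice function X : ℤ² → ℝ and all (m,n) ∈ ℤ²: Φ(m,n)·[A(m,n)Θ(m+2,n)X(m+2,n) + B(m,n)Θ(m,n+2)X(m,n+2) + 2C(m,n)Θ(m+1,n+1)X(m+1,n+1) + G(m,n)Θ(m+1,n)X(m+1,n) + H(m,n)Θ(m,n+1)X(m,n+1) − F(m,n)Θ(m,n)X(m,n)] = α(m+1,n)X(m+2,n) + β(m,n+1)X(m,n+2) + (γ(m+1,n)+δ(m,n+1))X(m+1,n+1) − (α(m+1,n)+α(m,n)+γ(m+1,n)+δ(m,n))X(m+1,n) − (β(m,n+1)+β(m,n)+γ(m,n)+δ(m,n+1))X(m,n+1) + (α(m,n)+β(m,n)+γ(m,n)+δ(m,n))X(m,n). Then Θ satisfies the 6-point scheme with coefficients (A,B,C,G,H,F) and Φ satisfies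 the adjoint 6-point scheme. -/
/-- if the gauge transformation with data `Θ`, `Φ` brings the 6-point
scheme to elementary transformable form, then `Θ` solves the scheme and `Φ` the
adjoint scheme. -/
theorem elementary_transformable_necessary
    (A B C G H F Θ Φ : ℤ → ℤ → ℝ)
    (hΘ0 : ∀ m n : ℤ, Θ m n ≠ 0) (hΦ0 : ∀ m n : ℤ, Φ m n ≠ 0)
    (h : ∃ α β γ δ : ℤ → ℤ → ℝ, ∀ (X : ℤ → ℤ → ℝ) (m n : ℤ),
      Φ m n * (A m n * Θ (m+2) n * X (m+2) n + B m n * Θ m (n+2) * X m (n+2)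
        + 2 * C m n * Θ (m+1) (n+1) * X (m+1) (n+1)
        + G m n * Θ (m+1) n * X (m+1) n + H m n * Θ m (n+1) * X m (n+1)
        - F m n * Θ m n * X m n) =
      α (m+1) n * X (m+2) n + β m (n+1) * X m (n+2)
        + (γ (m+1) n + δ m (n+1)) * X (m+1) (n+1)
        - (α (m+1) n + α m n + γ (m+1) n + δ m n) * X (m+1) n
        - (β m (n+1) + β m n + γ m n + δ m (n+1)) * X m (n+1)
        + (α m n + β m n + γ m n + δ m n) * X m n) :
    SixPointScheme A B C G H F Θ ∧ AdjSixPointScheme A B C G H F Φ := by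
  obtain ⟨α, β, γ, δ, heq⟩ := h
  constructor
  · intro m n
    have h1 := heq (fun _ _ => (1:ℝ)) m n
    simp only [mul_one] at h1
    have h2 : Φ m n * (A m n * Θ (m+2) n + B m n * Θ m (n+2)
        + 2 * C m n * Θ (m+1) (n+1) + G m n * Θ (m+1) n + H m n * Θ m (n+1)
        - F m n * Θ m n) = 0 := by linear_combination h1
    rcases mul_eq_zero.1 h2 with h' | h'
    · exact absurd h' (hΦ0 m n)
    · linarith
  · intro m n
    classical
    set X : ℤ → ℤ → ℝ := fun a b => if a = m ∧ b = n then 1 else 0 with hX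
    have h1 := heq X (m-2) n
    have h2 := heq X m (n-2)
    have h3 := heq X (m-1) (n-1)
    have h4 := heq X (m-1) n
    have h5 := heq X m (n-1)
    have h6 := heq X m n
    simp only [hX] at h1 h2 h3 h4 h5 h6
    norm_num at h1 h2 h3 h4 h5 h6
    have e1 : ¬ (m - 2 + 1 = m) := by omega
    have e2 : ¬ (n - 2 + 1 = n) := by omega
    have e3 : ¬ (m - 1 + 2 = m) := by omega
    have e4 : ¬ (n - 1 + 2 = n) := by omega
    simp only [if_neg e1, if_neg e2, if_neg e3, if_neg e4] at h1 h2 h4 h5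
    rw [show m - 2 + 1 = m - 1 by ring] at h1
    rw [show n - 2 + 1 = n - 1 by ring] at h2
    have key : Θ m n * (A (m-2) n * Φ (m-2) n + B m (n-2) * Φ m (n-2)
        + 2 * C (m-1) (n-1) * Φ (m-1) (n-1) + G (m-1) n * Φ (m-1) n
        + H m (n-1) * Φ m (n-1) - F m n * Φ m n) = 0 := by
      linear_combination h1 + h2 + h3 + h4 + h5 + h6
    rcases mul_eq_zero.1 key with h' | h'
    · exact absurd h' (hΘ0 m n)
    · linarith
end

section
/- Let F, G, Θ : ℤ² → ℝ be lattice functions with F(m,n) ≠ 0 for all (m,n), and suppose Θ satisfies the discrete Moutard equation F(m,n)·(Θ(m+1,n+1) + Θ(m,n)) = G(m,n)·(Θ(m+1,n) + Θ(m,n+1)) for all (m,n) ∈ ℤ². Define Φ(m,n) := (Θ(m+1,n) + Θ(m,n+1))/F(m,n). Then Φ satisfies the adjoint discrete Moutard equation: F(m−1,n−1)Φ(m−1,n−1) + F(m,n)Φ(m,n) = G(m−1,n)Φ(m−1,n) + G(m,n−1)Φ(m,n−1) for all (m,n) ∈ ℤ². -/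
/-- if `Θ` solves the discrete Moutard equation, then
`Φ = (Θ(m+1,n)+Θ(m,n+1))/F` solves the adjoint discrete Moutard equation. -/
theorem adjoint_moutard_solution
    (F G Θ : ℤ → ℤ → ℝ)
    (hF0 : ∀ m n : ℤ, F m n ≠ 0)
    (hΘ : ∀ m n : ℤ, F m n * (Θ (m+1) (n+1) + Θ m n) = G m n * (Θ (m+1) n + Θ m (n+1)))
    (Φ : ℤ → ℤ → ℝ)
    (hΦ : ∀ m n : ℤ, Φ m n = (Θ (m+1) n + Θ m (n+1)) / F m n) :
    ∀ m n : ℤ,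
      F (m-1) (n-1) * Φ (m-1) (n-1) + F m n * Φ m n =
        G (m-1) n * Φ (m-1) n + G m (n-1) * Φ m (n-1) := by
  intro m n
  have key : ∀ a b : ℤ, G a b * Φ a b = Θ (a+1) (b+1) + Θ a b := by
    intro a b
    rw [hΦ, mul_div_assoc', div_eq_iff (hF0 a b)]
    linear_combination -(hΘ a b)
  have keyF : ∀ a b : ℤ, F a b * Φ a b = Θ (a+1) b + Θ a (b+1) := by
    intro a b
    rw [hΦ, mul_div_cancel₀ _ (hF0 a b)]
  rw [keyF, keyF, key, key]
  simp only [sub_add_cancel]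
  ring
end

section
/- Let F, G, Θ : ℤ² → ℝ be lattice functions with F(m,n) ≠ 0 and Θ(m+1,n) + Θ(m,n+1) ≠ 0 for all (m,n), and suppose Θ satisfies the discrete Moutard equation F(m,n)(Θ(m+1,n+1) + Θ(m,n)) = G(m,n)(Θ(m+1,n) + Θ(m,n+1)) for all (m,n). Define Φ(m,n) := (Θ(m+1,n) + Θ(m,n+1))/F(m,n) and P(m,n) := (Θ(m+1,n) − Θ(m,n+1))/(2Φ(m,n)). Then P satisfies the P-equations for the coefficients (A,B,C,G,H) = (0, 0, −F/2, G, G), Θ, Φ; explicitly, for all (m,n): Φ(m,n)Θ(m+1,n+1)P(m,n) − Φ(m−1,n)Θ(m,n+1)P(m−1,n) = −[−(F(m−1,n)/2)Φ(m−1,n)Θ(m,n+1) − (F(m,n)/2)Φ(m,n)Θ(m+1,n+1) + G(m,n)Φ(m,n)Θ(m,n+1)] and Φ(m,n)Θ(m+1,n+1)P(m,n) − Φ(m,n−1)Θ(m+1,n)P(m,n−1) = −(F(m,n−1)/2)Φ(m,n−1)Θ(m+1,n) − (F(m,n)/2)Φ(m,n)Θ(m+1,n+1) + G(m,n)Φ(m,n)Θ(m+1,n).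 -/
/-- in the Moutard specification `(A,B,C,G,H) = (0,0,−F/2,G,G)` the
function `P = (Θ(m+1,n) − Θ(m,n+1))/(2Φ)` satisfies the P-equations. -/
theorem moutard_P_equations
    (F G Θ : ℤ → ℤ → ℝ)
    (hF0 : ∀ m n : ℤ, F m n ≠ 0)
    (hΘsum0 : ∀ m n : ℤ, Θ (m+1) n + Θ m (n+1) ≠ 0)
    (hΘ : ∀ m n : ℤ, F m n * (Θ (m+1) (n+1) + Θ m n) = G m n * (Θ (m+1) n + Θ m (n+1)))
    (Φ P : ℤ → ℤ → ℝ)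
    (hΦ : ∀ m n : ℤ, Φ m n = (Θ (m+1) n + Θ m (n+1)) / F m n)
    (hP : ∀ m n : ℤ, P m n = (Θ (m+1) n - Θ m (n+1)) / (2 * Φ m n)) :
    (∀ m n : ℤ,
      Φ m n * Θ (m+1) (n+1) * P m n - Φ (m-1) n * Θ m (n+1) * P (m-1) n =
        -(-(F (m-1) n / 2) * Φ (m-1) n * Θ m (n+1)
          - F m n / 2 * Φ m n * Θ (m+1) (n+1)
          + G m n * Φ m n * Θ m (n+1))) ∧
    (∀ m n : ℤ,
      Φ m n * Θ (m+1) (n+1) * P m n - Φ m (n-1) * Θ (m+1) n * P m (n-1) =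
        -(F m (n-1) / 2) * Φ m (n-1) * Θ (m+1) n
          - F m n / 2 * Φ m n * Θ (m+1) (n+1)
          + G m n * Φ m n * Θ (m+1) n) := by
  have hΦne : ∀ m n : ℤ, Φ m n ≠ 0 := by
    intro m n
    rw [hΦ]
    exact div_ne_zero (hΘsum0 m n) (hF0 m n)
  have hΦP : ∀ m n : ℤ, 2 * (Φ m n * P m n) = Θ (m+1) n - Θ m (n+1) := by
    intro m n
    rw [hP]
    field_simp [hΦne m n]
  have hFΦ : ∀ m n : ℤ, F m n * Φ m n = Θ (m+1) n + Θ m (n+1) := by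
    intro m n
    rw [hΦ]
    field_simp [hF0 m n]
  have hGΦ : ∀ m n : ℤ, G m n * Φ m n = Θ (m+1) (n+1) + Θ m n := by
    intro m n
    rw [hΦ, ← mul_div_assoc, div_eq_iff (hF0 m n)]
    linear_combination -hΘ m n
  constructor
  · intro m n
    have h1 := hΦP m n
    have h2 := hΦP (m-1) n
    have h3 := hFΦ (m-1) n
    have h4 := hFΦ m n
    have h5 := hGΦ m n
    rw [sub_add_cancel] at h2 h3
    linear_combination (Θ (m+1) (n+1)/2) * h1 - (Θ m (n+1)/2) * h2
      - (Θ m (n+1)/2) * h3 - (Θ (m+1) (n+1)/2) * h4 + Θ m (n+1) * h5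
  · intro m n
    have h1 := hΦP m n
    have h2 := hΦP m (n-1)
    have h3 := hFΦ m (n-1)
    have h4 := hFΦ m n
    have h5 := hGΦ m n
    rw [sub_add_cancel] at h2 h3
    linear_combination (Θ (m+1) (n+1)/2) * h1 - (Θ (m+1) n/2) * h2
      + (Θ (m+1) n/2) * h3 + (Θ (m+1) (n+1)/2) * h4 - Θ (m+1) n * h5
end

section
/- Let 𝒜, ℬ, 𝒞, ℱ, Θ, N, N̄ : ℤ² → ℝ be lattice functions such that: Θ(m,n) ≠ 0 for all (m,n); the function 𝒫(m,n) := Θ(m,n)𝒜(m,n)ℬ(m,n) + Θ(m−1,n)𝒞(m,n)𝒜(m,n) + Θ(m,n−1)𝒞(m,n)ℬ(m,n) is nowhere zero; Θ and N both satisfy the self-adjoint 7-point scheme with coefficients (𝒜,ℬ,𝒞,ℱ); and for all (m,n): Θ(m+1,n)N̄(m+1,n) − Θ(m,n)N̄(m,n) = 𝒞(m,n)Θ(m−1,n)Θ(m,n−1)·(N(m−1,n)/Θ(m−1,n) − N(m,n)/Θ(m,n)) − Θ(m,n−1)(ℬ(m,n)Θ(m,n) + 𝒞(m,n)Θ(m−1,n))·(N(m,n−1)/Θ(m,n−1)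 − N(m,n)/Θ(m,n)) and Θ(m,n+1)N̄(m,n+1) − Θ(m,n)N̄(m,n) = Θ(m−1,n)(𝒜(m,n)Θ(m,n) + 𝒞(m,n)Θ(m,n−1))·(N(m−1,n)/Θ(m−1,n) − N(m,n)/Θ(m,n)) − 𝒞(m,n)Θ(m−1,n)Θ(m,n−1)·(N(m,n−1)/Θ(m,n−1) − N(m,n)/Θ(m,n)). Then N̄ satisfies the self-adjoint 7-point scheme with coefficients (Ā,B̄,C̄,F̄) given by: Ā(m+1,n) = Θ(m,n)Θ(m+1,n)𝒜(m,n)/(Θ(m,n−1)𝒫(m,n)); B̄(m,n+1) = Θ(m,n)Θ(m,n+1)ℬ(m,n)/(Θ(m−1,n)𝒫(m,n)); C̄(m,n) = 𝒞(m−1,n−1)Θ(m−1,n)Θ(m,n−1)/(Θ(m−1,n−1)𝒫(m−1,n−1)); F̄(m,n) = Θ(m,n)·(Ā(m+1,n)/Θ(m+1,n) + Ā(m,n)/Θ(m−1,n) + B̄(m,n+1)/Θ(m,n+1) + B̄(m,n)/Θ(m,n−1) + C̄(m+1,n)/Θ(m+1,n−1) + C̄(m,n+1)/Θ(m−1,n+1)).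 -/
/-- A function `N` satisfies the self-adjoint 7-point scheme with coefficients
`(A,B,C,F)`. -/
def SevenPointScheme (A B C F N : ℤ → ℤ → ℝ) : Prop :=
  ∀ m n : ℤ,
    A (m+1) n * N (m+1) n + A m n * N (m-1) n
      + B m (n+1) * N m (n+1) + B m n * N m (n-1)
      + C (m+1) n * N (m+1) (n-1) + C m (n+1) * N (m-1) (n+1) = F m n * N m n

set_option maxHeartbeats 4000000 in
/-- Darboux transformation for the self-adjoint 7-point scheme. -/
theorem darboux_seven_point
    (A B C F Θ N Nb P Ab Bb Cb Fb : ℤ → ℤ → ℝ)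
    (hΘ0 : ∀ m n : ℤ, Θ m n ≠ 0)
    (hP : ∀ m n : ℤ, P m n =
      Θ m n * A m n * B m n + Θ (m-1) n * C m n * A m n + Θ m (n-1) * C m n * B m n)
    (hP0 : ∀ m n : ℤ, P m n ≠ 0)
    (hΘ : SevenPointScheme A B C F Θ)
    (hN : SevenPointScheme A B C F N)
    (h1 : ∀ m n : ℤ,
      Θ (m+1) n * Nb (m+1) n - Θ m n * Nb m n =
        C m n * Θ (m-1) n * Θ m (n-1) * (N (m-1) n / Θ (m-1) n - N m n / Θ m n)
        - Θ m (n-1) * (B m n * Θ m n + C m n * Θ (m-1) n)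
          * (N m (n-1) / Θ m (n-1) - N m n / Θ m n))
    (h2 : ∀ m n : ℤ,
      Θ m (n+1) * Nb m (n+1) - Θ m n * Nb m n =
        Θ (m-1) n * (A m n * Θ m n + C m n * Θ m (n-1))
          * (N (m-1) n / Θ (m-1) n - N m n / Θ m n)
        - C m n * Θ (m-1) n * Θ m (n-1) * (N m (n-1) / Θ m (n-1) - N m n / Θ m n))
    (hAb : ∀ m n : ℤ, Ab (m+1) n = Θ m n * Θ (m+1) n * A m n / (Θ m (n-1) * P m n))
    (hBb : ∀ m n : ℤ, Bb m (n+1) = Θ m n * Θ m (n+1) * B m n / (Θ (m-1) n * P m n))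
    (hCb : ∀ m n : ℤ, Cb m n =
      C (m-1) (n-1) * Θ (m-1) n * Θ m (n-1) / (Θ (m-1) (n-1) * P (m-1) (n-1)))
    (hFb : ∀ m n : ℤ, Fb m n = Θ m n *
      (Ab (m+1) n / Θ (m+1) n + Ab m n / Θ (m-1) n
        + Bb m (n+1) / Θ m (n+1) + Bb m n / Θ m (n-1)
        + Cb (m+1) n / Θ (m+1) (n-1) + Cb m (n+1) / Θ (m-1) (n+1))) :
    SevenPointScheme Ab Bb Cb Fb Nb := by
  intro m n
  have hs1 : m - 1 + 1 = m := by ring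
  have hs2 : n - 1 + 1 = n := by ring
  have hs3 : m + 1 - 1 = m := by ring
  have hs4 : n + 1 - 1 = n := by ring
  have e1 := h1 m n
  have e2 := h1 (m-1) n
  rw [hs1] at e2
  have e3 := h2 m n
  have e4 := h2 m (n-1)
  rw [hs2] at e4
  have e5 := h1 m (n-1)
  have e6 := h2 (m-1) n
  have hA1 := hAb m n
  have hA2 := hAb (m-1) n
  rw [hs1] at hA2
  have hB1 := hBb m n
  have hB2 := hBb m (n-1)
  rw [hs2] at hB2
  have hC1 := hCb (m+1) n
  rw [hs3] at hC1
  have hC2 := hCb m (n+1)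
  rw [hs4] at hC2
  have E1 : Θ m n * (Θ (m+1) n * Nb (m+1) n) - Θ m n * (Θ m n * Nb m n) =
      C m n * Θ m (n-1) * (N (m-1) n * Θ m n - N m n * Θ (m-1) n)
      - (B m n * Θ m n + C m n * Θ (m-1) n) * (N m (n-1) * Θ m n - N m n * Θ m (n-1)) := by
    linear_combination (norm := (field_simp [hΘ0 m n, hΘ0 (m-1) n, hΘ0 m (n-1)]; ring1)) Θ m n * e1
  have E2 : Θ (m-1) n * (Θ m n * Nb m n) - Θ (m-1) n * (Θ (m-1) n * Nb (m-1) n) =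
      C (m-1) n * Θ (m-1) (n-1) * (N (m-1-1) n * Θ (m-1) n - N (m-1) n * Θ (m-1-1) n)
      - (B (m-1) n * Θ (m-1) n + C (m-1) n * Θ (m-1-1) n) * (N (m-1) (n-1) * Θ (m-1) n - N (m-1) n * Θ (m-1) (n-1)) := by
    linear_combination (norm := (field_simp [hΘ0 (m-1) n, hΘ0 (m-1-1) n, hΘ0 (m-1) (n-1)]; ring1)) Θ (m-1) n * e2
  have E3 : Θ m n * (Θ m (n+1) * Nb m (n+1)) - Θ m n * (Θ m n * Nb m n) =
      (A m n * Θ m n + C m n * Θ m (n-1)) * (N (m-1) n * Θ m n - N m n * Θ (m-1) n)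
      - C m n * Θ (m-1) n * (N m (n-1) * Θ m n - N m n * Θ m (n-1)) := by
    linear_combination (norm := (field_simp [hΘ0 m n, hΘ0 (m-1) n, hΘ0 m (n-1)]; ring1)) Θ m n * e3
  have E4 : Θ m (n-1) * (Θ m n * Nb m n) - Θ m (n-1) * (Θ m (n-1) * Nb m (n-1)) =
      (A m (n-1) * Θ m (n-1) + C m (n-1) * Θ m (n-1-1)) * (N (m-1) (n-1) * Θ m (n-1) - N m (n-1) * Θ (m-1) (n-1))
      - C m (n-1) * Θ (m-1) (n-1) * (N m (n-1-1) * Θ m (n-1) - N m (n-1) * Θ m (n-1-1)) := by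
    linear_combination (norm := (field_simp [hΘ0 m (n-1), hΘ0 (m-1) (n-1), hΘ0 m (n-1-1)]; ring1)) Θ m (n-1) * e4
  have E5 : Θ m (n-1) * (Θ (m+1) (n-1) * Nb (m+1) (n-1)) - Θ m (n-1) * (Θ m (n-1) * Nb m (n-1)) =
      C m (n-1) * Θ m (n-1-1) * (N (m-1) (n-1) * Θ m (n-1) - N m (n-1) * Θ (m-1) (n-1))
      - (B m (n-1) * Θ m (n-1) + C m (n-1) * Θ (m-1) (n-1)) * (N m (n-1-1) * Θ m (n-1) - N m (n-1) * Θ m (n-1-1)) := by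
    linear_combination (norm := (field_simp [hΘ0 m (n-1), hΘ0 (m-1) (n-1), hΘ0 m (n-1-1)]; ring1)) Θ m (n-1) * e5
  have E6 : Θ (m-1) n * (Θ (m-1) (n+1) * Nb (m-1) (n+1)) - Θ (m-1) n * (Θ (m-1) n * Nb (m-1) n) =
      (A (m-1) n * Θ (m-1) n + C (m-1) n * Θ (m-1) (n-1)) * (N (m-1-1) n * Θ (m-1) n - N (m-1) n * Θ (m-1-1) n)
      - C (m-1) n * Θ (m-1-1) n * (N (m-1) (n-1) * Θ (m-1) n - N (m-1) n * Θ (m-1) (n-1)) := by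
    linear_combination (norm := (field_simp [hΘ0 (m-1) n, hΘ0 (m-1-1) n, hΘ0 (m-1) (n-1)]; ring1)) Θ (m-1) n * e6
  rw [hFb m n, hA1, hA2, hB1, hB2, hC1, hC2]
  have u1 : Θ m n ≠ 0 := hΘ0 m n
  have u2 : Θ (m-1) n ≠ 0 := hΘ0 (m-1) n
  have u3 : Θ m (n-1) ≠ 0 := hΘ0 m (n-1)
  have u4 : Θ (m-1) (n-1) ≠ 0 := hΘ0 (m-1) (n-1)
  have u5 : Θ (m+1) n ≠ 0 := hΘ0 (m+1) n
  have u6 : Θ m (n+1) ≠ 0 := hΘ0 m (n+1)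
  have u7 : Θ (m+1) (n-1) ≠ 0 := hΘ0 (m+1) (n-1)
  have u8 : Θ (m-1) (n+1) ≠ 0 := hΘ0 (m-1) (n+1)
  have u9 : Θ (m-1-1) n ≠ 0 := hΘ0 (m-1-1) n
  have u10 : Θ m (n-1-1) ≠ 0 := hΘ0 m (n-1-1)
  have v1 : P m n ≠ 0 := hP0 m n
  have v2 : P (m-1) n ≠ 0 := hP0 (m-1) n
  have v3 : P m (n-1) ≠ 0 := hP0 m (n-1)
  linear_combination (norm := (field_simp [u1, u2, u3, u4, u5, u6, u7, u8, u9, u10, v1, v2, v3]; ring1))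
    (A m n / (Θ m (n-1) * P m n)) * E1
    + (-(Θ m n * A (m-1) n / (Θ (m-1) n * Θ (m-1) (n-1) * P (m-1) n))
       - Θ m n * C (m-1) n / (Θ (m-1) n * Θ (m-1) n * P (m-1) n)) * E2
    + (B m n / (Θ (m-1) n * P m n)) * E3
    + (-(Θ m n * B m (n-1) / (Θ m (n-1) * Θ (m-1) (n-1) * P m (n-1)))
       - Θ m n * C m (n-1) / (Θ m (n-1) * Θ m (n-1) * P m (n-1))) * E4
    + (Θ m n * C m (n-1) / (Θ m (n-1) * Θ m (n-1) * P m (n-1))) * E5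
    + (Θ m n * C (m-1) n / (Θ (m-1) n * Θ (m-1) n * P (m-1) n)) * E6
    + ((-A (m-1) n * B (m-1) n * N (m-1) n * P m (n-1) * Θ m n * Θ m n * Θ (m-1) n * Θ (m-1) n * Θ m (n-1) * Θ m (n-1) * Θ (m-1) (n-1) + A (m-1) n * B (m-1) n * N (m-1) (n-1) * P m (n-1) * Θ m n * Θ m n * Θ (m-1) n * Θ (m-1) n * Θ (m-1) n * Θ m (n-1) * Θ m (n-1) - A (m-1) n * C (m-1) n * N (m-1) n * P m (n-1) * Θ m n * Θ m n * Θ (m-1) n * Θ m (n-1) * Θ m (n-1) * Θ (m-1) (n-1) * Θ (m-1-1) n + A (m-1) n * C (m-1) n * N (m-1) (n-1) * P m (n-1) * Θ m n * Θ m n * Θ (m-1) n * Θ (m-1) n * Θ m (n-1) * Θ m (n-1) * Θ (m-1-1) n + A m (n-1) * B m (n-1) * N m (n-1) * P (m-1) n * Θ m n * Θ m n * Θ (m-1) n * Θ (m-1) n * Θ m (n-1) * Θ m (n-1) * Θ (m-1) (n-1) - A m (n-1) * B m (n-1) * N (m-1) (n-1) * P (m-1) n * Θ m n * Θ m n * Θ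 (m-1) n * Θ (m-1) n * Θ m (n-1) * Θ m (n-1) * Θ m (n-1) + A m (n-1) * C m (n-1) * N m (n-1) * P (m-1) n * Θ m n * Θ m n * Θ (m-1) n * Θ (m-1) n * Θ m (n-1) * Θ (m-1) (n-1) * Θ (m-1) (n-1) - A m (n-1) * C m (n-1) * N (m-1) (n-1) * P (m-1) n * Θ m n * Θ m n * Θ (m-1) n * Θ (m-1) n * Θ m (n-1) * Θ m (n-1) * Θ (m-1) (n-1) - B (m-1) n * C (m-1) n * N (m-1) n * P m (n-1) * Θ m n * Θ m n * Θ (m-1) n * Θ m (n-1) * Θ m (n-1) * Θ (m-1) (n-1) * Θ (m-1) (n-1) + B (m-1) n * C (m-1) n * N (m-1) (n-1) * P m (n-1) * Θ m n * Θ m n * Θ (m-1) n * Θ (m-1) n * Θ m (n-1) * Θ m (n-1) * Θ (m-1) (n-1) + B m (n-1) * C m (n-1) * N m (n-1) * P (m-1) n * Θ m n * Θ m n * Θ (m-1) n * Θ (m-1) n * Θ m (n-1) * Θ (m-1) (n-1) * Θ m (n-1-1) - B m (n-1) * C m (n-1) * N (m-1) (n-1) * P (m-1) n * Θ m n * Θ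 m n * Θ (m-1) n * Θ (m-1) n * Θ m (n-1) * Θ m (n-1) * Θ m (n-1-1)) / (Θ m n * Θ (m-1) n * Θ (m-1) n * Θ m (n-1) * Θ m (n-1) * Θ (m-1) (n-1) * P m n * P (m-1) n * P m (n-1))) * hP m n
    + ((A m n * A m (n-1) * B m n * B m (n-1) * N m (n-1) * Θ m n * Θ m n * Θ m n * Θ (m-1) n * Θ (m-1) n * Θ m (n-1) * Θ m (n-1) * Θ (m-1) (n-1) - A m n * A m (n-1) * B m n * B m (n-1) * N (m-1) (n-1) * Θ m n * Θ m n * Θ m n * Θ (m-1) n * Θ (m-1) n * Θ m (n-1) * Θ m (n-1) * Θ m (n-1) + A m n * A m (n-1) * B m n * C m (n-1) * N m (n-1) * Θ m n * Θ m n * Θ m n * Θ (m-1) n * Θ (m-1) n * Θ m (n-1) * Θ (m-1) (n-1) * Θ (m-1) (n-1) - A m n * A m (n-1) * B m n * C m (n-1) * N (m-1) (n-1) * Θ m n * Θ m n * Θ m n * Θ (m-1) n * Θ (m-1) n * Θ m (n-1) * Θ m (n-1) * Θ (m-1) (n-1) + A m n * A m (n-1) * B m (n-1) * C m n * N m (n-1)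 * Θ m n * Θ m n * Θ (m-1) n * Θ (m-1) n * Θ (m-1) n * Θ m (n-1) * Θ m (n-1) * Θ (m-1) (n-1) - A m n * A m (n-1) * B m (n-1) * C m n * N (m-1) (n-1) * Θ m n * Θ m n * Θ (m-1) n * Θ (m-1) n * Θ (m-1) n * Θ m (n-1) * Θ m (n-1) * Θ m (n-1) + A m n * A m (n-1) * C m n * C m (n-1) * N m (n-1) * Θ m n * Θ m n * Θ (m-1) n * Θ (m-1) n * Θ (m-1) n * Θ m (n-1) * Θ (m-1) (n-1) * Θ (m-1) (n-1) - A m n * A m (n-1) * C m n * C m (n-1) * N (m-1) (n-1) * Θ m n * Θ m n * Θ (m-1) n * Θ (m-1) n * Θ (m-1) n * Θ m (n-1) * Θ m (n-1) * Θ (m-1) (n-1) + A m n * B m n * B m (n-1) * C m (n-1) * N m (n-1) * Θ m n * Θ m n * Θ m n * Θ (m-1) n * Θ (m-1) n * Θ m (n-1) * Θ (m-1) (n-1) * Θ m (n-1-1) - A m n * B m n * B m (n-1) * C m (n-1) * N (m-1) (n-1) * Θ m n * Θ m n * Θ m n * Θ (m-1) n * Θ (m-1) n * Θ m (n-1) *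 Θ m (n-1) * Θ m (n-1-1) + A m n * B m n * N (m-1) n * P m (n-1) * Θ m n * Θ m n * Θ m n * Θ (m-1) n * Θ m (n-1) * Θ m (n-1) * Θ (m-1) (n-1) - A m n * B m n * N m (n-1) * P m (n-1) * Θ m n * Θ m n * Θ m n * Θ (m-1) n * Θ (m-1) n * Θ m (n-1) * Θ (m-1) (n-1) + A m n * B m (n-1) * C m n * C m (n-1) * N m (n-1) * Θ m n * Θ m n * Θ (m-1) n * Θ (m-1) n * Θ (m-1) n * Θ m (n-1) * Θ (m-1) (n-1) * Θ m (n-1-1) - A m n * B m (n-1) * C m n * C m (n-1) * N (m-1) (n-1) * Θ m n * Θ m n * Θ (m-1) n * Θ (m-1) n * Θ (m-1) n * Θ m (n-1) * Θ m (n-1) * Θ m (n-1-1) + A m n * C m n * N (m-1) n * P m (n-1) * Θ m n * Θ m n * Θ (m-1) n * Θ (m-1) n * Θ m (n-1) * Θ m (n-1) * Θ (m-1) (n-1) - A m n * C m n * N m (n-1) * P m (n-1) * Θ m n * Θ m n * Θ (m-1) n * Θ (m-1) n * Θ (m-1) n * Θ m (n-1) * Θ (m-1) (n-1) + A m (n-1)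 * B m n * B m (n-1) * C m n * N m (n-1) * Θ m n * Θ m n * Θ (m-1) n * Θ (m-1) n * Θ m (n-1) * Θ m (n-1) * Θ m (n-1) * Θ (m-1) (n-1) - A m (n-1) * B m n * B m (n-1) * C m n * N (m-1) (n-1) * Θ m n * Θ m n * Θ (m-1) n * Θ (m-1) n * Θ m (n-1) * Θ m (n-1) * Θ m (n-1) * Θ m (n-1) + A m (n-1) * B m n * C m n * C m (n-1) * N m (n-1) * Θ m n * Θ m n * Θ (m-1) n * Θ (m-1) n * Θ m (n-1) * Θ m (n-1) * Θ (m-1) (n-1) * Θ (m-1) (n-1) - A m (n-1) * B m n * C m n * C m (n-1) * N (m-1) (n-1) * Θ m n * Θ m n * Θ (m-1) n * Θ (m-1) n * Θ m (n-1) * Θ m (n-1) * Θ m (n-1) * Θ (m-1) (n-1) + B m n * B m (n-1) * C m n * C m (n-1) * N m (n-1) * Θ m n * Θ m n * Θ (m-1) n * Θ (m-1) n * Θ m (n-1) * Θ m (n-1) * Θ (m-1) (n-1) * Θ m (n-1-1) - B m n * B m (n-1) * C m n * C m (n-1) * N (m-1) (n-1) * Θ m n * Θ m n * Θ (m-1)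 n * Θ (m-1) n * Θ m (n-1) * Θ m (n-1) * Θ m (n-1) * Θ m (n-1-1) + B m n * C m n * N (m-1) n * P m (n-1) * Θ m n * Θ m n * Θ (m-1) n * Θ m (n-1) * Θ m (n-1) * Θ m (n-1) * Θ (m-1) (n-1) - B m n * C m n * N m (n-1) * P m (n-1) * Θ m n * Θ m n * Θ (m-1) n * Θ (m-1) n * Θ m (n-1) * Θ m (n-1) * Θ (m-1) (n-1)) / (Θ m n * Θ (m-1) n * Θ (m-1) n * Θ m (n-1) * Θ m (n-1) * Θ (m-1) (n-1) * P m n * P (m-1) n * P m (n-1))) * hP (m-1) n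
    + ((-A m n * A (m-1) n * B m n * B (m-1) n * N m (n-1) * Θ m n * Θ m n * Θ m n * Θ (m-1) n * Θ (m-1) n * Θ (m-1) n * Θ m (n-1) * Θ (m-1) (n-1) + A m n * A (m-1) n * B m n * B (m-1) n * N (m-1) (n-1) * Θ m n * Θ m n * Θ m n * Θ (m-1) n * Θ (m-1) n * Θ (m-1) n * Θ m (n-1) * Θ m (n-1) - A m n * A (m-1) n * B m n * C (m-1) n * N m (n-1) * Θ m n * Θ m n * Θ m n * Θ (m-1) n * Θ (m-1) n * Θ m (n-1) * Θ (m-1) (n-1) * Θ (m-1-1) n + A m n * A (m-1) n * B m n * C (m-1) n * N (m-1) (n-1) * Θ m n * Θ m n * Θ m n * Θ (m-1) n * Θ (m-1) n * Θ m (n-1) * Θ m (n-1) * Θ (m-1-1) n - A m n * A (m-1) n * B (m-1) n * C m n * N m (n-1) * Θ m n * Θ m n * Θ (m-1) n * Θ (m-1) n * Θ (m-1) n * Θ (m-1) n * Θ m (n-1) * Θ (m-1) (n-1) + A m n * A (m-1) n * B (m-1) n * C m n * N (m-1) (n-1) * Θ m n * Θ m n * Θ (m-1) n * Θ (m-1)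 n * Θ (m-1) n * Θ (m-1) n * Θ m (n-1) * Θ m (n-1) - A m n * A (m-1) n * C m n * C (m-1) n * N m (n-1) * Θ m n * Θ m n * Θ (m-1) n * Θ (m-1) n * Θ (m-1) n * Θ m (n-1) * Θ (m-1) (n-1) * Θ (m-1-1) n + A m n * A (m-1) n * C m n * C (m-1) n * N (m-1) (n-1) * Θ m n * Θ m n * Θ (m-1) n * Θ (m-1) n * Θ (m-1) n * Θ m (n-1) * Θ m (n-1) * Θ (m-1-1) n - A m n * B m n * B (m-1) n * C (m-1) n * N m (n-1) * Θ m n * Θ m n * Θ m n * Θ (m-1) n * Θ (m-1) n * Θ m (n-1) * Θ (m-1) (n-1) * Θ (m-1) (n-1) + A m n * B m n * B (m-1) n * C (m-1) n * N (m-1) (n-1) * Θ m n * Θ m n * Θ m n * Θ (m-1) n * Θ (m-1) n * Θ m (n-1) * Θ m (n-1) * Θ (m-1) (n-1) - A m n * B (m-1) n * C m n * C (m-1) n * N m (n-1) * Θ m n * Θ m n * Θ (m-1) n * Θ (m-1) n * Θ (m-1) n * Θ m (n-1) * Θ (m-1) (n-1) * Θ (m-1) (n-1) + A m n * B (m-1)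 n * C m n * C (m-1) n * N (m-1) (n-1) * Θ m n * Θ m n * Θ (m-1) n * Θ (m-1) n * Θ (m-1) n * Θ m (n-1) * Θ m (n-1) * Θ (m-1) (n-1) - A (m-1) n * B m n * B (m-1) n * C m n * N m (n-1) * Θ m n * Θ m n * Θ (m-1) n * Θ (m-1) n * Θ (m-1) n * Θ m (n-1) * Θ m (n-1) * Θ (m-1) (n-1) + A (m-1) n * B m n * B (m-1) n * C m n * N (m-1) (n-1) * Θ m n * Θ m n * Θ (m-1) n * Θ (m-1) n * Θ (m-1) n * Θ m (n-1) * Θ m (n-1) * Θ m (n-1) - A (m-1) n * B m n * C m n * C (m-1) n * N m (n-1) * Θ m n * Θ m n * Θ (m-1) n * Θ (m-1) n * Θ m (n-1) * Θ m (n-1) * Θ (m-1) (n-1) * Θ (m-1-1) n + A (m-1) n * B m n * C m n * C (m-1) n * N (m-1) (n-1) * Θ m n * Θ m n * Θ (m-1) n * Θ (m-1) n * Θ m (n-1) * Θ m (n-1) * Θ m (n-1) * Θ (m-1-1) n - B m n * B (m-1) n * C m n * C (m-1) n * N m (n-1) * Θ m n * Θ m n * Θ (m-1) n * Θ (m-1)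 n * Θ m (n-1) * Θ m (n-1) * Θ (m-1) (n-1) * Θ (m-1) (n-1) + B m n * B (m-1) n * C m n * C (m-1) n * N (m-1) (n-1) * Θ m n * Θ m n * Θ (m-1) n * Θ (m-1) n * Θ m (n-1) * Θ m (n-1) * Θ m (n-1) * Θ (m-1) (n-1)) / (Θ m n * Θ (m-1) n * Θ (m-1) n * Θ m (n-1) * Θ m (n-1) * Θ (m-1) (n-1) * P m n * P (m-1) n * P m (n-1))) * hP m (n-1)
end

section
/- Let 𝒜, ℬ, 𝒞, ℱ, Ψ : ℤ² → ℝ be lattice functions, and define N(m,n) := Ψ(m+1,n) + Ψ(m,n+1). Then for all (m,n) ∈ ℤ² the following identity holds: 𝒜(m+1,n)N(m+1,n) + 𝒜(m,n)N(m−1,n) + ℬ(m,n+1)N(m,n+1) + ℬ(m,n)N(m,n−1) + 𝒞(m+1,n)N(m+1,n−1) + 𝒞(m,n+1)N(m−1,n+1) − ℱ(m,n)N(m,n) = (𝒜(m,n)+ℬ(m,n))Ψ(m,n) + (𝒜(m+1,n)+ℬ(m,n+1))Ψ(m+1,n+1) + 𝒜(m,n)Ψ(m−1,n+1) + ℬ(m,n)Ψ(m+1,n−1)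 + 𝒜(m+1,n)Ψ(m+2,n) + ℬ(m,n+1)Ψ(m,n+2) + 𝒞(m+1,n)Ψ(m+2,n−1) + 𝒞(m,n+1)Ψ(m−1,n+2) + (𝒞(m+1,n)−ℱ(m,n))Ψ(m+1,n) + (𝒞(m,n+1)−ℱ(m,n))Ψ(m,n+1). In particular, Ψ satisfies the 10-point scheme with coefficients (𝒜,ℬ,𝒞,ℱ) if and only if N satisfies the self-adjoint 7-point scheme with coefficients (𝒜,ℬ,𝒞,ℱ). -/
/-- A function `Ψ` satisfies the 10-point scheme with coefficients `(A,B,C,F)`. -/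
def TenPointScheme (A B C F Ψ : ℤ → ℤ → ℝ) : Prop :=
  ∀ m n : ℤ,
    (A m n + B m n) * Ψ m n + (A (m+1) n + B m (n+1)) * Ψ (m+1) (n+1)
      + A m n * Ψ (m-1) (n+1) + B m n * Ψ (m+1) (n-1)
      + A (m+1) n * Ψ (m+2) n + B m (n+1) * Ψ m (n+2)
      + C (m+1) n * Ψ (m+2) (n-1) + C m (n+1) * Ψ (m-1) (n+2)
      + (C (m+1) n - F m n) * Ψ (m+1) n + (C m (n+1) - F m n) * Ψ m (n+1) = 0

/-- substituting `N = Ψ(m+1,n) + Ψ(m,n+1)` into the self-adjoint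
7-point scheme yields the 10-point scheme. -/
theorem seven_point_ten_point_identity
    (A B C F Ψ N : ℤ → ℤ → ℝ)
    (hN : ∀ m n : ℤ, N m n = Ψ (m+1) n + Ψ m (n+1)) :
    (∀ m n : ℤ,
      A (m+1) n * N (m+1) n + A m n * N (m-1) n
        + B m (n+1) * N m (n+1) + B m n * N m (n-1)
        + C (m+1) n * N (m+1) (n-1) + C m (n+1) * N (m-1) (n+1) - F m n * N m n =
      (A m n + B m n) * Ψ m n + (A (m+1) n + B m (n+1)) * Ψ (m+1) (n+1)
        + A m n * Ψ (m-1) (n+1) + B m n * Ψ (m+1) (n-1)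
        + A (m+1) n * Ψ (m+2) n + B m (n+1) * Ψ m (n+2)
        + C (m+1) n * Ψ (m+2) (n-1) + C m (n+1) * Ψ (m-1) (n+2)
        + (C (m+1) n - F m n) * Ψ (m+1) n + (C m (n+1) - F m n) * Ψ m (n+1)) ∧
    (TenPointScheme A B C F Ψ ↔ SevenPointScheme A B C F N) := by
  have key : ∀ m n : ℤ,
      A (m+1) n * N (m+1) n + A m n * N (m-1) n
        + B m (n+1) * N m (n+1) + B m n * N m (n-1)
        + C (m+1) n * N (m+1) (n-1) + C m (n+1) * N (m-1) (n+1) - F m n * N m n =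
      (A m n + B m n) * Ψ m n + (A (m+1) n + B m (n+1)) * Ψ (m+1) (n+1)
        + A m n * Ψ (m-1) (n+1) + B m n * Ψ (m+1) (n-1)
        + A (m+1) n * Ψ (m+2) n + B m (n+1) * Ψ m (n+2)
        + C (m+1) n * Ψ (m+2) (n-1) + C m (n+1) * Ψ (m-1) (n+2)
        + (C (m+1) n - F m n) * Ψ (m+1) n + (C m (n+1) - F m n) * Ψ m (n+1) := by
    intro m n
    simp only [hN]
    have e1 : m + 1 + 1 = m + 2 := by ring
    have e2 : m - 1 + 1 = m := by ring
    have e3 : n - 1 + 1 = n := by ring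
    have e4 : n + 1 + 1 = n + 2 := by ring
    rw [e1, e2, e3, e4]
    ring
  refine ⟨key, ?_⟩
  constructor
  · intro h m n
    have := key m n
    have h2 := h m n
    linarith
  · intro h m n
    have := key m n
    have h2 := h m n
    linarith
end

section
/- Let 𝒜, ℬ, 𝒞, ℱ, Θ : ℤ² → ℝ be lattice functions such that Θ satisfies the 10-point scheme with coefficients (𝒜,ℬ,𝒞,ℱ). Define Φ(m,n) := Θ(m+1,n) + Θ(m,n+1). Then Φ satisfies the formally adjoint 10-point equation: for all (m,n) ∈ ℤ², (𝒜(m,n)+ℬ(m,n))Φ(m,n) + (𝒜(m,n−1)+ℬ(m−1,n))Φ(m−1,n−1) + 𝒜(m+1,n−1)Φ(m+1,n−1) + ℬ(m−1,n+1)Φ(m−1,n+1) + 𝒜(m−1,n)Φ(m−2,n) + ℬ(m,n−1)Φ(m,n−2) + 𝒞(m−1,n+1)Φ(m−2,n+1) + 𝒞(m+1,n−1)Φ(m+1,n−2) + (𝒞(m,n)−ℱ(m−1,n))Φ(m−1,n) + (𝒞(m,n)−ℱ(m,n−1))Φ(m,n−1) = 0. -/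
/-- if `Θ` solves the 10-point scheme, then
`Φ = Θ(m+1,n) + Θ(m,n+1)` solves the formally adjoint 10-point equation. -/
theorem adjoint_ten_point_solution
    (A B C F Θ Φ : ℤ → ℤ → ℝ)
    (hΘ : TenPointScheme A B C F Θ)
    (hΦ : ∀ m n : ℤ, Φ m n = Θ (m+1) n + Θ m (n+1)) :
    ∀ m n : ℤ,
      (A m n + B m n) * Φ m n + (A m (n-1) + B (m-1) n) * Φ (m-1) (n-1)
        + A (m+1) (n-1) * Φ (m+1) (n-1) + B (m-1) (n+1) * Φ (m-1) (n+1)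
        + A (m-1) n * Φ (m-2) n + B m (n-1) * Φ m (n-2)
        + C (m-1) (n+1) * Φ (m-2) (n+1) + C (m+1) (n-1) * Φ (m+1) (n-2)
        + (C m n - F (m-1) n) * Φ (m-1) n + (C m n - F m (n-1)) * Φ m (n-1) = 0 := by
  intro m n
  have h1 := hΘ (m-1) n
  have h2 := hΘ m (n-1)
  simp only [hΦ]
  ring_nf
  ring_nf at h1 h2
  linarith
end

section
/- Let 𝒜, ℬ, 𝒞, ℱ, Θ, Ψ, Ψ̄ : ℤ² → ℝ be lattice functions. Define ϑ(m,n) := Θ(m+1,n) + Θ(m,n+1), N(m,n) := Ψ(m+1,n) + Ψ(m,n+1), N̄(m,n) := Ψ̄(m+1,n) + Ψ̄(m,n+1). Assume: Θ and Ψ satisfy the 10-point scheme with coefficients (𝒜,ℬ,𝒞,ℱ); ϑ(m,n) ≠ 0 for all (m,n); the function 𝒫(m,n) := ϑ(m,n)𝒜(m,n)ℬ(m,n) + ϑ(m−1,n)𝒞(m,n)𝒜(m,n) + ϑ(m,n−1)𝒞(m,n)ℬ(m,n) is nowhere zero; and for all (m,n): ϑ(m+1,n)N̄(m+1,n) − ϑ(m,n)N̄(m,n)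 = 𝒞(m,n)ϑ(m−1,n)ϑ(m,n−1)·(N(m−1,n)/ϑ(m−1,n) − N(m,n)/ϑ(m,n)) − ϑ(m,n−1)(ℬ(m,n)ϑ(m,n) + 𝒞(m,n)ϑ(m−1,n))·(N(m,n−1)/ϑ(m,n−1) − N(m,n)/ϑ(m,n)) and ϑ(m,n+1)N̄(m,n+1) − ϑ(m,n)N̄(m,n) = ϑ(m−1,n)(𝒜(m,n)ϑ(m,n) + 𝒞(m,n)ϑ(m,n−1))·(N(m−1,n)/ϑ(m−1,n) − N(m,n)/ϑ(m,n)) − 𝒞(m,n)ϑ(m−1,n)ϑ(m,n−1)·(N(m,n−1)/ϑ(m,n−1) − N(m,n)/ϑ(m,n)). Then N̄ satisfies the self-adjoint 7-point scheme with coefficients (Ā,B̄,C̄,F̄) given by: Ā(m+1,n) = ϑ(m,n)ϑ(m+1,n)𝒜(m,n)/(ϑ(m,n−1)𝒫(m,n)); B̄(m,n+1) = ϑ(m,n)ϑ(m,n+1)ℬ(m,n)/(ϑ(m−1,n)𝒫(m,n)); C̄(m,n) = 𝒞(m−1,n−1)ϑ(m−1,n)ϑ(m,n−1)/(ϑ(m−1,n−1)𝒫(m−1,n−1));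 F̄(m,n) = ϑ(m,n)·(Ā(m+1,n)/ϑ(m+1,n) + Ā(m,n)/ϑ(m−1,n) + B̄(m,n+1)/ϑ(m,n+1) + B̄(m,n)/ϑ(m,n−1) + C̄(m+1,n)/ϑ(m+1,n−1) + C̄(m,n+1)/ϑ(m−1,n+1)). -/
private lemma grp1 (a b c θ θl θd nn nl nd p : ℝ)
    (ht : θ ≠ 0) (hl : θl ≠ 0) (hd : θd ≠ 0) (hp0 : p ≠ 0)
    (hp : p = θ * a * b + θl * c * a + θd * c * b) :
    a / (θd * p) * (c * θl * θd * (nl / θl - nn / θ)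
        - θd * (b * θ + c * θl) * (nd / θd - nn / θ))
      + b / (θl * p) * (θl * (a * θ + c * θd) * (nl / θl - nn / θ)
        - c * θl * θd * (nd / θd - nn / θ))
      = nl / θl - nd / θd := by
  field_simp; subst hp; ring

private lemma grp2 (a b c θ θl θd nn nl nd p : ℝ)
    (ht : θ ≠ 0) (hl : θl ≠ 0) (hd : θd ≠ 0) (hp0 : p ≠ 0)
    (hp : p = θ * a * b + θl * c * a + θd * c * b) :
    -(a / (θd * p)) * (c * θl * θd * (nl / θl - nn / θ)
        - θd * (b * θ + c * θl) * (nd / θd - nn / θ))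
      + c / (θ * p) * ((θl * (a * θ + c * θd) * (nl / θl - nn / θ)
          - c * θl * θd * (nd / θd - nn / θ))
        - (c * θl * θd * (nl / θl - nn / θ)
          - θd * (b * θ + c * θl) * (nd / θd - nn / θ)))
      = nd / θd - nn / θ := by
  field_simp; subst hp; ring

private lemma grp3 (a b c θ θl θd nn nl nd p : ℝ)
    (ht : θ ≠ 0) (hl : θl ≠ 0) (hd : θd ≠ 0) (hp0 : p ≠ 0)
    (hp : p = θ * a * b + θl * c * a + θd * c * b) :
    -(b / (θl * p)) * (θl * (a * θ + c * θd) * (nl / θl - nn / θ)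
        - c * θl * θd * (nd / θd - nn / θ))
      + c / (θ * p) * ((c * θl * θd * (nl / θl - nn / θ)
          - θd * (b * θ + c * θl) * (nd / θd - nn / θ))
        - (θl * (a * θ + c * θd) * (nl / θl - nn / θ)
          - c * θl * θd * (nd / θd - nn / θ)))
      = nn / θ - nl / θl := by
  field_simp; subst hp; ring

private lemma cancelT (u y d X : ℝ) (hy : y ≠ 0) (hd : d ≠ 0) :
    u * y / d * (X / y) = u / d * X := by
  field_simp

private lemma cancelF (u y d : ℝ) (hy : y ≠ 0) (hd : d ≠ 0) :
    u * y / d / y = u / d := by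
  field_simp

/-- discrete Moutard type transformation built on the 10-point
scheme. -/
theorem darboux_ten_point
    (A B C F Θ Ψ Ψb ϑ N Nb P Ab Bb Cb Fb : ℤ → ℤ → ℝ)
    (hϑ : ∀ m n : ℤ, ϑ m n = Θ (m+1) n + Θ m (n+1))
    (hNdef : ∀ m n : ℤ, N m n = Ψ (m+1) n + Ψ m (n+1))
    (hNbdef : ∀ m n : ℤ, Nb m n = Ψb (m+1) n + Ψb m (n+1))
    (hΘ : TenPointScheme A B C F Θ)
    (hΨ : TenPointScheme A B C F Ψ)
    (hϑ0 : ∀ m n : ℤ, ϑ m n ≠ 0)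
    (hP : ∀ m n : ℤ, P m n =
      ϑ m n * A m n * B m n + ϑ (m-1) n * C m n * A m n + ϑ m (n-1) * C m n * B m n)
    (hP0 : ∀ m n : ℤ, P m n ≠ 0)
    (h1 : ∀ m n : ℤ,
      ϑ (m+1) n * Nb (m+1) n - ϑ m n * Nb m n =
        C m n * ϑ (m-1) n * ϑ m (n-1) * (N (m-1) n / ϑ (m-1) n - N m n / ϑ m n)
        - ϑ m (n-1) * (B m n * ϑ m n + C m n * ϑ (m-1) n)
          * (N m (n-1) / ϑ m (n-1) - N m n / ϑ m n))
    (h2 : ∀ m n : ℤ,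
      ϑ m (n+1) * Nb m (n+1) - ϑ m n * Nb m n =
        ϑ (m-1) n * (A m n * ϑ m n + C m n * ϑ m (n-1))
          * (N (m-1) n / ϑ (m-1) n - N m n / ϑ m n)
        - C m n * ϑ (m-1) n * ϑ m (n-1) * (N m (n-1) / ϑ m (n-1) - N m n / ϑ m n))
    (hAb : ∀ m n : ℤ, Ab (m+1) n = ϑ m n * ϑ (m+1) n * A m n / (ϑ m (n-1) * P m n))
    (hBb : ∀ m n : ℤ, Bb m (n+1) = ϑ m n * ϑ m (n+1) * B m n / (ϑ (m-1) n * P m n))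
    (hCb : ∀ m n : ℤ, Cb m n =
      C (m-1) (n-1) * ϑ (m-1) n * ϑ m (n-1) / (ϑ (m-1) (n-1) * P (m-1) (n-1)))
    (hFb : ∀ m n : ℤ, Fb m n = ϑ m n *
      (Ab (m+1) n / ϑ (m+1) n + Ab m n / ϑ (m-1) n
        + Bb m (n+1) / ϑ m (n+1) + Bb m n / ϑ m (n-1)
        + Cb (m+1) n / ϑ (m+1) (n-1) + Cb m (n+1) / ϑ (m-1) (n+1))) :
    SevenPointScheme Ab Bb Cb Fb Nb := by
  intro m n
  have sm : m - 1 + 1 = m := by ring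
  have sn : n - 1 + 1 = n := by ring
  have sm' : m + 1 - 1 = m := by ring
  have sn' : n + 1 - 1 = n := by ring
  -- coefficient formulas
  have eA1 := hAb m n
  have eA0 := hAb (m-1) n
  rw [sm] at eA0
  have eB1 := hBb m n
  have eB0 := hBb m (n-1)
  rw [sn] at eB0
  have eC1 := hCb (m+1) n
  rw [sm'] at eC1
  have eC0 := hCb m (n+1)
  rw [sn'] at eC0
  -- difference relations
  have H1 := h1 m n
  have H1' := h1 (m-1) n
  rw [sm] at H1'
  have H1d := h1 m (n-1)
  have H2 := h2 m n
  have H2d := h2 m (n-1)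
  rw [sn] at H2d
  have H2' := h2 (m-1) n
  -- nonvanishing
  have t0 := hϑ0 m n
  have t1 := hϑ0 (m+1) n
  have t2 := hϑ0 (m-1) n
  have t3 := hϑ0 m (n+1)
  have t4 := hϑ0 m (n-1)
  have t5 := hϑ0 (m+1) (n-1)
  have t6 := hϑ0 (m-1) (n+1)
  have t7 := hϑ0 (m-1) (n-1)
  have t8 := hϑ0 (m-1-1) n
  have t9 := hϑ0 m (n-1-1)
  have q0 := hP0 m n
  have q1 := hP0 (m-1) n
  have q2 := hP0 m (n-1)
  have d0 : ϑ m (n-1) * P m n ≠ 0 := mul_ne_zero t4 q0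
  have d1 : ϑ (m-1) (n-1) * P (m-1) n ≠ 0 := mul_ne_zero t7 q1
  have d2 : ϑ (m-1) n * P m n ≠ 0 := mul_ne_zero t2 q0
  have d3 : ϑ (m-1) (n-1) * P m (n-1) ≠ 0 := mul_ne_zero t7 q2
  have d4 : ϑ m (n-1) * P m (n-1) ≠ 0 := mul_ne_zero t4 q2
  have d5 : ϑ (m-1) n * P (m-1) n ≠ 0 := mul_ne_zero t2 q1
  -- neighbor values of Nb
  have En1 : Nb (m+1) n = (ϑ m n * Nb m n
      + (C m n * ϑ (m-1) n * ϑ m (n-1) * (N (m-1) n / ϑ (m-1) n - N m n / ϑ m n)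
        - ϑ m (n-1) * (B m n * ϑ m n + C m n * ϑ (m-1) n)
          * (N m (n-1) / ϑ m (n-1) - N m n / ϑ m n))) / ϑ (m+1) n := by
    rw [eq_div_iff t1]; linarith [H1]
  have En2 : Nb (m-1) n = (ϑ m n * Nb m n
      - (C (m-1) n * ϑ (m-1-1) n * ϑ (m-1) (n-1)
          * (N (m-1-1) n / ϑ (m-1-1) n - N (m-1) n / ϑ (m-1) n)
        - ϑ (m-1) (n-1) * (B (m-1) n * ϑ (m-1) n + C (m-1) n * ϑ (m-1-1) n)
          * (N (m-1) (n-1) / ϑ (m-1) (n-1) - N (m-1) n / ϑ (m-1) n))) / ϑ (m-1) n := by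
    rw [eq_div_iff t2]; linarith [H1']
  have En3 : Nb m (n+1) = (ϑ m n * Nb m n
      + (ϑ (m-1) n * (A m n * ϑ m n + C m n * ϑ m (n-1))
          * (N (m-1) n / ϑ (m-1) n - N m n / ϑ m n)
        - C m n * ϑ (m-1) n * ϑ m (n-1)
          * (N m (n-1) / ϑ m (n-1) - N m n / ϑ m n))) / ϑ m (n+1) := by
    rw [eq_div_iff t3]; linarith [H2]
  have En4 : Nb m (n-1) = (ϑ m n * Nb m n
      - (ϑ (m-1) (n-1) * (A m (n-1) * ϑ m (n-1) + C m (n-1) * ϑ m (n-1-1))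
          * (N (m-1) (n-1) / ϑ (m-1) (n-1) - N m (n-1) / ϑ m (n-1))
        - C m (n-1) * ϑ (m-1) (n-1) * ϑ m (n-1-1)
          * (N m (n-1-1) / ϑ m (n-1-1) - N m (n-1) / ϑ m (n-1)))) / ϑ m (n-1) := by
    rw [eq_div_iff t4]; linarith [H2d]
  have En5 : Nb (m+1) (n-1) = (ϑ m n * Nb m n
      - (ϑ (m-1) (n-1) * (A m (n-1) * ϑ m (n-1) + C m (n-1) * ϑ m (n-1-1))
          * (N (m-1) (n-1) / ϑ (m-1) (n-1) - N m (n-1) / ϑ m (n-1))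
        - C m (n-1) * ϑ (m-1) (n-1) * ϑ m (n-1-1)
          * (N m (n-1-1) / ϑ m (n-1-1) - N m (n-1) / ϑ m (n-1)))
      + (C m (n-1) * ϑ (m-1) (n-1) * ϑ m (n-1-1)
          * (N (m-1) (n-1) / ϑ (m-1) (n-1) - N m (n-1) / ϑ m (n-1))
        - ϑ m (n-1-1) * (B m (n-1) * ϑ m (n-1) + C m (n-1) * ϑ (m-1) (n-1))
          * (N m (n-1-1) / ϑ m (n-1-1) - N m (n-1) / ϑ m (n-1)))) / ϑ (m+1) (n-1) := by
    rw [eq_div_iff t5]; linarith [H1d, H2d]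
  have En6 : Nb (m-1) (n+1) = (ϑ m n * Nb m n
      - (C (m-1) n * ϑ (m-1-1) n * ϑ (m-1) (n-1)
          * (N (m-1-1) n / ϑ (m-1-1) n - N (m-1) n / ϑ (m-1) n)
        - ϑ (m-1) (n-1) * (B (m-1) n * ϑ (m-1) n + C (m-1) n * ϑ (m-1-1) n)
          * (N (m-1) (n-1) / ϑ (m-1) (n-1) - N (m-1) n / ϑ (m-1) n))
      + (ϑ (m-1-1) n * (A (m-1) n * ϑ (m-1) n + C (m-1) n * ϑ (m-1) (n-1))
          * (N (m-1-1) n / ϑ (m-1-1) n - N (m-1) n / ϑ (m-1) n)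
        - C (m-1) n * ϑ (m-1-1) n * ϑ (m-1) (n-1)
          * (N (m-1) (n-1) / ϑ (m-1) (n-1) - N (m-1) n / ϑ (m-1) n))) / ϑ (m-1) (n+1) := by
    rw [eq_div_iff t6]; linarith [H1', H2']
  -- reduced forms of the six products and of the Fb summands
  have T1 : Ab (m+1) n * Nb (m+1) n = ϑ m n * A m n / (ϑ m (n-1) * P m n)
      * (ϑ m n * Nb m n
      + (C m n * ϑ (m-1) n * ϑ m (n-1) * (N (m-1) n / ϑ (m-1) n - N m n / ϑ m n)
        - ϑ m (n-1) * (B m n * ϑ m n + C m n * ϑ (m-1) n)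
          * (N m (n-1) / ϑ m (n-1) - N m n / ϑ m n))) := by
    rw [eA1, En1,
      show ϑ m n * ϑ (m+1) n * A m n = ϑ m n * A m n * ϑ (m+1) n from by ring]
    exact cancelT _ _ _ _ t1 d0
  have T2 : Ab m n * Nb (m-1) n = ϑ m n * A (m-1) n / (ϑ (m-1) (n-1) * P (m-1) n)
      * (ϑ m n * Nb m n
      - (C (m-1) n * ϑ (m-1-1) n * ϑ (m-1) (n-1)
          * (N (m-1-1) n / ϑ (m-1-1) n - N (m-1) n / ϑ (m-1) n)
        - ϑ (m-1) (n-1) * (B (m-1) n * ϑ (m-1) n + C (m-1) n * ϑ (m-1-1) n)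
          * (N (m-1) (n-1) / ϑ (m-1) (n-1) - N (m-1) n / ϑ (m-1) n))) := by
    rw [eA0, En2,
      show ϑ (m-1) n * ϑ m n * A (m-1) n = ϑ m n * A (m-1) n * ϑ (m-1) n from by ring]
    exact cancelT _ _ _ _ t2 d1
  have T3 : Bb m (n+1) * Nb m (n+1) = ϑ m n * B m n / (ϑ (m-1) n * P m n)
      * (ϑ m n * Nb m n
      + (ϑ (m-1) n * (A m n * ϑ m n + C m n * ϑ m (n-1))
          * (N (m-1) n / ϑ (m-1) n - N m n / ϑ m n)
        - C m n * ϑ (m-1) n * ϑ m (n-1)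
          * (N m (n-1) / ϑ m (n-1) - N m n / ϑ m n))) := by
    rw [eB1, En3,
      show ϑ m n * ϑ m (n+1) * B m n = ϑ m n * B m n * ϑ m (n+1) from by ring]
    exact cancelT _ _ _ _ t3 d2
  have T4 : Bb m n * Nb m (n-1) = ϑ m n * B m (n-1) / (ϑ (m-1) (n-1) * P m (n-1))
      * (ϑ m n * Nb m n
      - (ϑ (m-1) (n-1) * (A m (n-1) * ϑ m (n-1) + C m (n-1) * ϑ m (n-1-1))
          * (N (m-1) (n-1) / ϑ (m-1) (n-1) - N m (n-1) / ϑ m (n-1))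
        - C m (n-1) * ϑ (m-1) (n-1) * ϑ m (n-1-1)
          * (N m (n-1-1) / ϑ m (n-1-1) - N m (n-1) / ϑ m (n-1)))) := by
    rw [eB0, En4,
      show ϑ m (n-1) * ϑ m n * B m (n-1) = ϑ m n * B m (n-1) * ϑ m (n-1) from by ring]
    exact cancelT _ _ _ _ t4 d3
  have T5 : Cb (m+1) n * Nb (m+1) (n-1) = C m (n-1) * ϑ m n / (ϑ m (n-1) * P m (n-1))
      * (ϑ m n * Nb m n
      - (ϑ (m-1) (n-1) * (A m (n-1) * ϑ m (n-1) + C m (n-1) * ϑ m (n-1-1))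
          * (N (m-1) (n-1) / ϑ (m-1) (n-1) - N m (n-1) / ϑ m (n-1))
        - C m (n-1) * ϑ (m-1) (n-1) * ϑ m (n-1-1)
          * (N m (n-1-1) / ϑ m (n-1-1) - N m (n-1) / ϑ m (n-1)))
      + (C m (n-1) * ϑ (m-1) (n-1) * ϑ m (n-1-1)
          * (N (m-1) (n-1) / ϑ (m-1) (n-1) - N m (n-1) / ϑ m (n-1))
        - ϑ m (n-1-1) * (B m (n-1) * ϑ m (n-1) + C m (n-1) * ϑ (m-1) (n-1))
          * (N m (n-1-1) / ϑ m (n-1-1) - N m (n-1) / ϑ m (n-1)))) := by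
    rw [eC1, En5]
    exact cancelT _ _ _ _ t5 d4
  have T6 : Cb m (n+1) * Nb (m-1) (n+1) = C (m-1) n * ϑ m n / (ϑ (m-1) n * P (m-1) n)
      * (ϑ m n * Nb m n
      - (C (m-1) n * ϑ (m-1-1) n * ϑ (m-1) (n-1)
          * (N (m-1-1) n / ϑ (m-1-1) n - N (m-1) n / ϑ (m-1) n)
        - ϑ (m-1) (n-1) * (B (m-1) n * ϑ (m-1) n + C (m-1) n * ϑ (m-1-1) n)
          * (N (m-1) (n-1) / ϑ (m-1) (n-1) - N (m-1) n / ϑ (m-1) n))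
      + (ϑ (m-1-1) n * (A (m-1) n * ϑ (m-1) n + C (m-1) n * ϑ (m-1) (n-1))
          * (N (m-1-1) n / ϑ (m-1-1) n - N (m-1) n / ϑ (m-1) n)
        - C (m-1) n * ϑ (m-1-1) n * ϑ (m-1) (n-1)
          * (N (m-1) (n-1) / ϑ (m-1) (n-1) - N (m-1) n / ϑ (m-1) n))) := by
    rw [eC0, En6,
      show C (m-1) n * ϑ (m-1) (n+1) * ϑ m n = C (m-1) n * ϑ m n * ϑ (m-1) (n+1) from by ring]
    exact cancelT _ _ _ _ t6 d5
  have F1 : Ab (m+1) n / ϑ (m+1) n = ϑ m n * A m n / (ϑ m (n-1) * P m n) := by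
    rw [eA1,
      show ϑ m n * ϑ (m+1) n * A m n = ϑ m n * A m n * ϑ (m+1) n from by ring]
    exact cancelF _ _ _ t1 d0
  have F2 : Ab m n / ϑ (m-1) n = ϑ m n * A (m-1) n / (ϑ (m-1) (n-1) * P (m-1) n) := by
    rw [eA0,
      show ϑ (m-1) n * ϑ m n * A (m-1) n = ϑ m n * A (m-1) n * ϑ (m-1) n from by ring]
    exact cancelF _ _ _ t2 d1
  have F3 : Bb m (n+1) / ϑ m (n+1) = ϑ m n * B m n / (ϑ (m-1) n * P m n) := by
    rw [eB1,
      show ϑ m n * ϑ m (n+1) * B m n = ϑ m n * B m n * ϑ m (n+1) from by ring]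
    exact cancelF _ _ _ t3 d2
  have F4 : Bb m n / ϑ m (n-1) = ϑ m n * B m (n-1) / (ϑ (m-1) (n-1) * P m (n-1)) := by
    rw [eB0,
      show ϑ m (n-1) * ϑ m n * B m (n-1) = ϑ m n * B m (n-1) * ϑ m (n-1) from by ring]
    exact cancelF _ _ _ t4 d3
  have F5 : Cb (m+1) n / ϑ (m+1) (n-1) = C m (n-1) * ϑ m n / (ϑ m (n-1) * P m (n-1)) := by
    rw [eC1]
    exact cancelF _ _ _ t5 d4
  have F6 : Cb m (n+1) / ϑ (m-1) (n+1) = C (m-1) n * ϑ m n / (ϑ (m-1) n * P (m-1) n) := by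
    rw [eC0,
      show C (m-1) n * ϑ (m-1) (n+1) * ϑ m n = C (m-1) n * ϑ m n * ϑ (m-1) (n+1) from by ring]
    exact cancelF _ _ _ t6 d5
  rw [hFb m n, T1, T2, T3, T4, T5, T6, F1, F2, F3, F4, F5, F6]
  linear_combination
    ϑ m n * grp1 (A m n) (B m n) (C m n) (ϑ m n) (ϑ (m-1) n) (ϑ m (n-1))
      (N m n) (N (m-1) n) (N m (n-1)) (P m n) t0 t2 t4 q0 (hP m n)
    + ϑ m n * grp2 (A (m-1) n) (B (m-1) n) (C (m-1) n) (ϑ (m-1) n) (ϑ (m-1-1) n)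
      (ϑ (m-1) (n-1)) (N (m-1) n) (N (m-1-1) n) (N (m-1) (n-1)) (P (m-1) n)
      t2 t8 t7 q1 (hP (m-1) n)
    + ϑ m n * grp3 (A m (n-1)) (B m (n-1)) (C m (n-1)) (ϑ m (n-1)) (ϑ (m-1) (n-1))
      (ϑ m (n-1-1)) (N m (n-1)) (N (m-1) (n-1)) (N m (n-1-1)) (P m (n-1))
      t4 t7 t9 q2 (hP m (n-1))
end

section
/- Let α, β, γ, δ : ℝ² → ℝ be C¹ functions with γ(x,y)δ(x,y) − α(x,y)β(x,y) ≠ 0 for all (x,y) ∈ ℝ², let ψ : ℝ² → ℝ be C², and let ψ̄ : ℝ² → ℝ be C² with ψ̄_x = δψ_x + βψ_y and ψ̄_y = −αψ_x − γψ_y on all of ℝ². Define ᾱ := α/(γδ−αβ), β̄ := β/(γδ−αβ), γ̄ := δ/(γδ−αβ), δ̄ := γ/(γδ−αβ). Then ψ̄ satisfies on ℝ² the equation ᾱ ψ̄_xx + β̄ ψ̄_yy + (γ̄ + δ̄) ψ̄_xy + (ᾱ_x + δ̄_y) ψ̄_x + (β̄_y + γ̄_x) ψ̄_y = 0. -/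
/-- Partial derivative with respect to the first variable. -/
noncomputable def px (f : ℝ × ℝ → ℝ) : ℝ × ℝ → ℝ :=
  fun p => fderiv ℝ f p (1, 0)

/-- Partial derivative with respect to the second variable. -/
noncomputable def py (f : ℝ × ℝ → ℝ) : ℝ × ℝ → ℝ :=
  fun p => fderiv ℝ f p (0, 1)

lemma contDiff_pd {f : ℝ × ℝ → ℝ} (hf : ContDiff ℝ 2 f) (v : ℝ × ℝ) :
    ContDiff ℝ 1 (fun q => fderiv ℝ f q v) :=
  (ContinuousLinearMap.apply ℝ ℝ v).contDiff.comp (hf.fderiv_right (by norm_num))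

lemma fderiv_pd {f : ℝ × ℝ → ℝ} (hf : ContDiff ℝ 2 f) (p v w : ℝ × ℝ) :
    fderiv ℝ (fun q => fderiv ℝ f q v) p w = fderiv ℝ (fderiv ℝ f) p w v := by
  have hF : DifferentiableAt ℝ (fderiv ℝ f) p :=
    ((hf.fderiv_right (m := 1) (by norm_num)).differentiable one_ne_zero) p
  have h : (fun q => fderiv ℝ f q v) = (ContinuousLinearMap.apply ℝ ℝ v) ∘ (fderiv ℝ f) := rfl
  rw [h, fderiv_comp p (ContinuousLinearMap.apply ℝ ℝ v).differentiableAt hF]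
  simp

lemma clairaut {f : ℝ × ℝ → ℝ} (hf : ContDiff ℝ 2 f) (p : ℝ × ℝ) :
    px (py f) p = py (px f) p := by
  have hsymm := hf.contDiffAt (x := p) |>.isSymmSndFDerivAt (le_of_eq minSmoothness_of_isRCLikeNormedField)
  show fderiv ℝ (fun q => fderiv ℝ f q (0,1)) p (1,0)
      = fderiv ℝ (fun q => fderiv ℝ f q (1,0)) p (0,1)
  rw [fderiv_pd hf p (0,1) (1,0), fderiv_pd hf p (1,0) (0,1)]
  exact hsymm _ _

lemma pd_two_mul {a f b g : ℝ × ℝ → ℝ} (p v : ℝ × ℝ)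
    (ha : DifferentiableAt ℝ a p) (hf : DifferentiableAt ℝ f p)
    (hb : DifferentiableAt ℝ b p) (hg : DifferentiableAt ℝ g p) :
    fderiv ℝ (fun q => a q * f q + b q * g q) p v
      = a p * fderiv ℝ f p v + fderiv ℝ a p v * f p
        + (b p * fderiv ℝ g p v + fderiv ℝ b p v * g p) := by
  rw [fderiv_fun_add (f := fun q => a q * f q) (g := fun q => b q * g q) (ha.mul hf) (hb.mul hg), fderiv_fun_mul ha hf, fderiv_fun_mul hb hg]
  simp [mul_comm]

/-- the transformed function `ψ̄` satisfies the elementary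
transformable equation with the bared coefficients. -/
theorem transformed_elementary_transformable_eq
    (α β γ δ ψ ψb : ℝ × ℝ → ℝ)
    (hα : ContDiff ℝ 1 α) (hβ : ContDiff ℝ 1 β)
    (hγ : ContDiff ℝ 1 γ) (hδ : ContDiff ℝ 1 δ)
    (hdet : ∀ p : ℝ × ℝ, γ p * δ p - α p * β p ≠ 0)
    (hψ : ContDiff ℝ 2 ψ) (hψb : ContDiff ℝ 2 ψb)
    (hx : ∀ p : ℝ × ℝ, px ψb p = δ p * px ψ p + β p * py ψ p)
    (hy : ∀ p : ℝ × ℝ, py ψb p = - α p * px ψ p - γ p * py ψ p)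
    (αb βb γb δb : ℝ × ℝ → ℝ)
    (hαb : ∀ p : ℝ × ℝ, αb p = α p / (γ p * δ p - α p * β p))
    (hβb : ∀ p : ℝ × ℝ, βb p = β p / (γ p * δ p - α p * β p))
    (hγb : ∀ p : ℝ × ℝ, γb p = δ p / (γ p * δ p - α p * β p))
    (hδb : ∀ p : ℝ × ℝ, δb p = γ p / (γ p * δ p - α p * β p)) :
    ∀ p : ℝ × ℝ,
      αb p * px (px ψb) p + βb p * py (py ψb) p + (γb p + δb p) * px (py ψb) p
        + (px αb p + py δb p) * px ψb p + (py βb p + px γb p) * py ψb p = 0 := by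
  intro p
  -- ContDiff facts
  have hd : ContDiff ℝ 1 (fun q => γ q * δ q - α q * β q) := (hγ.mul hδ).sub (hα.mul hβ)
  have hαb' : αb = fun q => α q / (γ q * δ q - α q * β q) := funext hαb
  have hβb' : βb = fun q => β q / (γ q * δ q - α q * β q) := funext hβb
  have hγb' : γb = fun q => δ q / (γ q * δ q - α q * β q) := funext hγb
  have hδb' : δb = fun q => γ q / (γ q * δ q - α q * β q) := funext hδb
  have hcαb : ContDiff ℝ 1 αb := hαb' ▸ hα.div hd hdet
  have hcβb : ContDiff ℝ 1 βb := hβb' ▸ hβ.div hd hdet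
  have hcγb : ContDiff ℝ 1 γb := hγb' ▸ hδ.div hd hdet
  have hcδb : ContDiff ℝ 1 δb := hδb' ▸ hγ.div hd hdet
  have hpxb : ContDiff ℝ 1 (px ψb) := contDiff_pd hψb (1,0)
  have hpyb : ContDiff ℝ 1 (py ψb) := contDiff_pd hψb (0,1)
  have dαb := (hcαb.differentiable one_ne_zero) p
  have dβb := (hcβb.differentiable one_ne_zero) p
  have dγb := (hcγb.differentiable one_ne_zero) p
  have dδb := (hcδb.differentiable one_ne_zero) p
  have dpxb := (hpxb.differentiable one_ne_zero) p
  have dpyb := (hpyb.differentiable one_ne_zero) p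
  -- pointwise identities for the first-order combinations
  have hU : (fun q => αb q * px ψb q + γb q * py ψb q) = fun q => -(py ψ q) := by
    funext q
    rw [hαb q, hγb q, hx q, hy q]
    field_simp [hdet q]
    ring
  have hV : (fun q => δb q * px ψb q + βb q * py ψb q) = fun q => px ψ q := by
    funext q
    rw [hδb q, hβb q, hx q, hy q]
    field_simp [hdet q]
    ring
  -- differentiate hU in x
  have eq1 : αb p * px (px ψb) p + px αb p * px ψb p
      + (γb p * px (py ψb) p + px γb p * py ψb p) = -(px (py ψ) p) := by
    have h1 : fderiv ℝ (fun q => αb q * px ψb q + γb q * py ψb q) p (1,0)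
        = fderiv ℝ (fun q => -(py ψ q)) p (1,0) := by rw [hU]
    rw [pd_two_mul p (1,0) dαb dpxb dγb dpyb] at h1
    have h2 : fderiv ℝ (fun q => -(py ψ q)) p (1,0) = -(fderiv ℝ (py ψ) p (1,0)) := by
      rw [fderiv_fun_neg]; simp
    rw [h2] at h1
    exact h1
  -- differentiate hV in y
  have eq2 : δb p * py (px ψb) p + py δb p * px ψb p
      + (βb p * py (py ψb) p + py βb p * py ψb p) = py (px ψ) p := by
    have h1 : fderiv ℝ (fun q => δb q * px ψb q + βb q * py ψb q) p (0,1)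
        = fderiv ℝ (fun q => px ψ q) p (0,1) := by rw [hV]
    rw [pd_two_mul p (0,1) dδb dpxb dβb dpyb] at h1
    exact h1
  have hC1 : px (py ψb) p = py (px ψb) p := clairaut hψb p
  have hC2 : px (py ψ) p = py (px ψ) p := clairaut hψ p
  rw [hC1] at eq1 ⊢
  linear_combination eq1 + eq2 - hC2
end
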